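/- Let f be a nonnegative measurable function on [t₀, T], λ a nonnegative locally integrable function, and μ a positive increasing continuous function. If f(t) ≤ α + ∫_{t₀}^t λ(s) μ(f(s)) ds for all t ∈ [t₀,T] with α > 0, then W(f(t)) ≤ W(α) + ∫_{t₀}^t λ(s) ds, where W(x) = ∫_a^x dr/μ(r) for some fixed a > 0. -/

import Mathlib

open MeasureTheory intervalIntegral

private lemma osgood_aux (t₀ T α : ℝ) (f lam μ : ℝ → ℝ)
    (hlam_nonneg : ∀ s, 0 ≤ lam s)
    (hlam_int : IntervalIntegrable lam volume t₀ T)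
    (hint : IntervalIntegrable (fun s => lam s * μ (f s)) volume t₀ T)
    (hμ_pos : ∀ r, 0 < μ r) (hμ_mono : Monotone μ) (hμ_cont : Continuous μ)
    (hα : 0 < α)
    (h : ∀ t ∈ Set.Icc t₀ T, f t ≤ α + ∫ s in t₀..t, lam s * μ (f s))
    (t : ℝ) (ht₀ : t₀ ≤ t) (htT : t ≤ T) :
    (∫ r in α..(α + ∫ s in t₀..t, lam s * μ (f s)), (μ r)⁻¹) ≤ ∫ s in t₀..t, lam s := by
  have ht₀T : t₀ ≤ T := le_trans ht₀ htT
  set g : ℝ → ℝ := fun s => α + ∫ u in t₀..s, lam u * μ (f u) with hg_def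
  have hc : Continuous fun r => (μ r)⁻¹ := hμ_cont.inv₀ fun r => (hμ_pos r).ne'
  -- restriction of integrability
  have hsubset : ∀ u v : ℝ, u ∈ Set.Icc t₀ T → v ∈ Set.Icc t₀ T →
      Set.uIcc u v ⊆ Set.uIcc t₀ T := by
    intro u v hu hv
    rw [Set.uIcc_of_le ht₀T]
    exact Set.uIcc_subset_Icc hu hv
  have hint' : ∀ u v : ℝ, u ∈ Set.Icc t₀ T → v ∈ Set.Icc t₀ T →
      IntervalIntegrable (fun s => lam s * μ (f s)) volume u v :=
    fun u v hu hv => hint.mono_set (hsubset u v hu hv)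
  have hlam' : ∀ u v : ℝ, u ∈ Set.Icc t₀ T → v ∈ Set.Icc t₀ T →
      IntervalIntegrable lam volume u v :=
    fun u v hu hv => hlam_int.mono_set (hsubset u v hu hv)
  -- g difference formula
  have hg_diff : ∀ u v : ℝ, u ∈ Set.Icc t₀ T → v ∈ Set.Icc t₀ T →
      g v - g u = ∫ s in u..v, lam s * μ (f s) := by
    intro u v hu hv
    have := integral_add_adjacent_intervals
      (hint' t₀ u (Set.left_mem_Icc.2 ht₀T) hu) (hint' u v hu hv)
    simp only [hg_def]
    rw [← this]
    ring
  have hg_mono : ∀ u v : ℝ, u ∈ Set.Icc t₀ T → v ∈ Set.Icc t₀ T → u ≤ v → g u ≤ g v := by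
    intro u v hu hv huv
    have h1 : 0 ≤ ∫ s in u..v, lam s * μ (f s) :=
      intervalIntegral.integral_nonneg huv fun s _ =>
        mul_nonneg (hlam_nonneg s) (hμ_pos _).le
    have := hg_diff u v hu hv
    linarith
  have hg_t₀ : g t₀ = α := by simp [hg_def]
  have hαg : ∀ u : ℝ, u ∈ Set.Icc t₀ T → α ≤ g u := by
    intro u hu
    rw [← hg_t₀]
    exact hg_mono t₀ u (Set.left_mem_Icc.2 ht₀T) hu hu.1
  -- continuity of g
  have hg_cont : ContinuousOn g (Set.Icc t₀ T) := by
    have := continuousOn_primitive_interval' hint (Set.left_mem_uIcc)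
    rw [Set.uIcc_of_le ht₀T] at this
    exact continuousOn_const.add this
  -- per-interval bound
  have key : ∀ u v : ℝ, u ∈ Set.Icc t₀ T → v ∈ Set.Icc t₀ T → u ≤ v →
      (∫ r in g u..g v, (μ r)⁻¹) ≤ μ (g v) * (μ (g u))⁻¹ * ∫ s in u..v, lam s := by
    intro u v hu hv huv
    have hguv : g u ≤ g v := hg_mono u v hu hv huv
    have step1 : (∫ r in g u..g v, (μ r)⁻¹) ≤ (g v - g u) * (μ (g u))⁻¹ := by
      have : (∫ r in g u..g v, (μ r)⁻¹) ≤ ∫ _r in g u..g v, (μ (g u))⁻¹ := by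
        refine integral_mono_on hguv (hc.intervalIntegrable _ _) intervalIntegrable_const
          fun r hr => ?_
        exact inv_anti₀ (hμ_pos _) (hμ_mono hr.1)
      simpa [smul_eq_mul] using this
    have step2 : g v - g u ≤ (∫ s in u..v, lam s) * μ (g v) := by
      rw [hg_diff u v hu hv]
      have hmono : (∫ s in u..v, lam s * μ (f s)) ≤ ∫ s in u..v, lam s * μ (g v) := by
        refine integral_mono_on huv (hint' u v hu hv)
          ((hlam' u v hu hv).mul_const _) fun s hs => ?_
        have hsI : s ∈ Set.Icc t₀ T := ⟨le_trans hu.1 hs.1, le_trans hs.2 hv.2⟩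
        have hfs : f s ≤ g s := h s hsI
        have : f s ≤ g v := le_trans hfs (hg_mono s v hsI hv hs.2)
        exact mul_le_mul_of_nonneg_left (hμ_mono this) (hlam_nonneg s)
      rw [intervalIntegral.integral_mul_const] at hmono
      exact hmono
    calc (∫ r in g u..g v, (μ r)⁻¹) ≤ (g v - g u) * (μ (g u))⁻¹ := step1
      _ ≤ ((∫ s in u..v, lam s) * μ (g v)) * (μ (g u))⁻¹ :=
          mul_le_mul_of_nonneg_right step2 (inv_nonneg.2 (hμ_pos _).le)
      _ = μ (g v) * (μ (g u))⁻¹ * ∫ s in u..v, lam s := by ring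
  -- main estimate
  set C : ℝ := ∫ s in t₀..t, lam s with hC_def
  have hC0 : 0 ≤ C :=
    intervalIntegral.integral_nonneg ht₀ fun s _ => hlam_nonneg s
  show (∫ r in α..g t, (μ r)⁻¹) ≤ C
  refine le_of_forall_pos_le_add fun ε hε => ?_
  -- uniform continuity of μ ∘ g on [t₀, t]
  have hcompact : IsCompact (Set.Icc t₀ t) := isCompact_Icc
  have hIccsub : Set.Icc t₀ t ⊆ Set.Icc t₀ T := Set.Icc_subset_Icc le_rfl htT
  have hμg_cont : ContinuousOn (fun s => μ (g s)) (Set.Icc t₀ t) :=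
    hμ_cont.comp_continuousOn (hg_cont.mono hIccsub)
  have hUC : UniformContinuousOn (fun s => μ (g s)) (Set.Icc t₀ t) :=
    hcompact.uniformContinuousOn_of_continuous hμg_cont
  have hμα0 : 0 < μ α := hμ_pos α
  set εμ : ℝ := ε * μ α / (C + 1) with hεμ_def
  have hεμ : 0 < εμ := div_pos (mul_pos hε hμα0) (by linarith)
  obtain ⟨δ, hδ, hδ'⟩ := Metric.uniformContinuousOn_iff.1 hUC εμ hεμ
  obtain ⟨n, hn⟩ := exists_nat_gt (max 1 ((t - t₀) / δ))
  have hn1 : (1 : ℝ) < n := lt_of_le_of_lt (le_max_left _ _) hn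
  have hn0 : 0 < (n : ℝ) := lt_trans zero_lt_one hn1
  have hnn : n ≠ 0 := by exact_mod_cast hn0.ne'
  set Δ : ℝ := (t - t₀) / n with hΔ_def
  have hΔ0 : 0 ≤ Δ := div_nonneg (by linarith) hn0.le
  have hΔδ : Δ < δ := by
    have h2 : (t - t₀) / δ < n := lt_of_le_of_lt (le_max_right _ _) hn
    have h3 : t - t₀ < n * δ := (div_lt_iff₀ hδ).1 h2
    rw [hΔ_def, div_lt_iff₀ hn0]
    nlinarith
  set p : ℕ → ℝ := fun i => t₀ + i * Δ with hp_def
  have hp0 : p 0 = t₀ := by simp [hp_def]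
  have hpn : p n = t := by
    simp only [hp_def, hΔ_def]
    field_simp
    ring
  have hp_mono : ∀ i j : ℕ, i ≤ j → p i ≤ p j := by
    intro i j hij
    simp only [hp_def]
    have : (i : ℝ) ≤ j := by exact_mod_cast hij
    nlinarith
  have hp_mem : ∀ i : ℕ, i ≤ n → p i ∈ Set.Icc t₀ t := by
    intro i hi
    constructor
    · rw [← hp0]; exact hp_mono 0 i (Nat.zero_le _)
    · rw [← hpn]; exact hp_mono i n hi
  have hp_step : ∀ i : ℕ, p (i + 1) - p i = Δ := by
    intro i; simp only [hp_def]; push_cast; ring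
  -- telescoping sums
  have hsumlam : (∑ i ∈ Finset.range n, ∫ s in p i..p (i+1), lam s) = C := by
    have := intervalIntegral.sum_integral_adjacent_intervals (a := p) (n := n)
      (f := lam) (μ := volume) ?_
    · rw [this, hp0, hpn]
    · intro k hk
      exact hlam' _ _ (hIccsub (hp_mem k (le_of_lt hk)))
        (hIccsub (hp_mem (k+1) hk))
  have hsumμ : (∑ i ∈ Finset.range n, ∫ r in g (p i)..g (p (i+1)), (μ r)⁻¹)
      = ∫ r in α..g t, (μ r)⁻¹ := by
    have := intervalIntegral.sum_integral_adjacent_intervals (a := fun i => g (p i)) (n := n)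
      (f := fun r => (μ r)⁻¹) (μ := volume) ?_
    · rw [this, hp0, hpn, hg_t₀]
    · intro k _
      exact hc.intervalIntegrable _ _
  -- per-term bound with uniform continuity
  have hterm : ∀ i : ℕ, i < n →
      (∫ r in g (p i)..g (p (i+1)), (μ r)⁻¹)
        ≤ (1 + εμ / μ α) * ∫ s in p i..p (i+1), lam s := by
    intro i hi
    have hpi := hp_mem i hi.le
    have hpi1 := hp_mem (i+1) hi
    have hpiT := hIccsub hpi
    have hpi1T := hIccsub hpi1
    have hple : p i ≤ p (i+1) := hp_mono i (i+1) (Nat.le_succ i)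
    have hkey := key (p i) (p (i+1)) hpiT hpi1T hple
    have hlamnn : 0 ≤ ∫ s in p i..p (i+1), lam s :=
      intervalIntegral.integral_nonneg hple fun s _ => hlam_nonneg s
    refine le_trans hkey (mul_le_mul_of_nonneg_right ?_ hlamnn)
    -- μ (g (p (i+1))) / μ (g (p i)) ≤ 1 + εμ / μ α
    have hdist : dist (p (i+1)) (p i) < δ := by
      rw [Real.dist_eq, abs_of_nonneg (by linarith [hp_step i] : (0:ℝ) ≤ p (i+1) - p i)]
      rw [hp_step i]; exact hΔδ
    have hμd : dist (μ (g (p (i+1)))) (μ (g (p i))) < εμ := hδ' _ hpi1 _ hpi hdist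
    have hnum : μ (g (p (i+1))) - μ (g (p i)) < εμ :=
      lt_of_le_of_lt (le_abs_self _) (by rwa [Real.dist_eq] at hμd)
    have hy : μ α ≤ μ (g (p i)) := hμ_mono (hαg _ hpiT)
    have hy0 : 0 < μ (g (p i)) := hμ_pos _
    have hyinv : (0:ℝ) < (μ (g (p i)))⁻¹ := inv_pos.2 hy0
    have h1 : μ (g (p (i+1))) ≤ μ (g (p i)) + εμ := by linarith
    have hxy : μ (g (p (i+1))) * (μ (g (p i)))⁻¹ ≤ 1 + εμ * (μ (g (p i)))⁻¹ := by
      have h2 := mul_le_mul_of_nonneg_right h1 hyinv.le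
      rw [add_mul, mul_inv_cancel₀ hy0.ne'] at h2
      exact h2
    have h3 : εμ * (μ (g (p i)))⁻¹ ≤ εμ / μ α := by
      rw [div_eq_mul_inv]
      exact mul_le_mul_of_nonneg_left (inv_anti₀ hμα0 hy) hεμ.le
    linarith
  -- combine
  calc (∫ r in α..g t, (μ r)⁻¹)
      = ∑ i ∈ Finset.range n, ∫ r in g (p i)..g (p (i+1)), (μ r)⁻¹ := hsumμ.symm
    _ ≤ ∑ i ∈ Finset.range n, (1 + εμ / μ α) * ∫ s in p i..p (i+1), lam s :=
        Finset.sum_le_sum fun i hi => hterm i (Finset.mem_range.1 hi)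
    _ = (1 + εμ / μ α) * C := by rw [← Finset.mul_sum, hsumlam]
    _ ≤ C + ε := by
        have hC1 : (0:ℝ) < C + 1 := by linarith
        have heq : εμ / μ α * C = ε * C / (C + 1) := by
          rw [hεμ_def]; field_simp
        have hle : ε * C / (C + 1) ≤ ε := by
          rw [div_le_iff₀ hC1]; nlinarith
        nlinarith [heq, hle]

theorem osgood_lemma (t₀ T α a : ℝ) (f lam μ : ℝ → ℝ)
    (hf_meas : Measurable f)
    (hf_nonneg : ∀ t ∈ Set.Icc t₀ T, 0 ≤ f t)
    (hlam_nonneg : ∀ s, 0 ≤ lam s)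
    (hlam_int : IntervalIntegrable lam volume t₀ T)
    (hint : IntervalIntegrable (fun s => lam s * μ (f s)) volume t₀ T)
    (hμ_pos : ∀ r, 0 < μ r) (hμ_mono : Monotone μ) (hμ_cont : Continuous μ)
    (hα : 0 < α) (ha : 0 < a)
    (h : ∀ t ∈ Set.Icc t₀ T, f t ≤ α + ∫ s in t₀..t, lam s * μ (f s)) :
    ∀ t ∈ Set.Icc t₀ T,
      (∫ r in a..(f t), (μ r)⁻¹) ≤ (∫ r in a..α, (μ r)⁻¹) + ∫ s in t₀..t, lam s := by
  intro t ht
  obtain ⟨ht₀, htT⟩ := ht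
  have hc : Continuous fun r => (μ r)⁻¹ := hμ_cont.inv₀ fun r => (hμ_pos r).ne'
  set G : ℝ := α + ∫ s in t₀..t, lam s * μ (f s) with hG_def
  have hfG : f t ≤ G := h t ⟨ht₀, htT⟩
  have haux := osgood_aux t₀ T α f lam μ hlam_nonneg hlam_int hint hμ_pos hμ_mono hμ_cont
    hα h t ht₀ htT
  -- W monotone : ∫ a..(f t) ≤ ∫ a..G
  have hWmono : (∫ r in a..(f t), (μ r)⁻¹) ≤ ∫ r in a..G, (μ r)⁻¹ := by
    have hsplit := integral_add_adjacent_intervals (μ := volume)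
      (hc.intervalIntegrable a (f t)) (hc.intervalIntegrable (f t) G)
    have hnn : 0 ≤ ∫ r in (f t)..G, (μ r)⁻¹ :=
      intervalIntegral.integral_nonneg hfG fun r _ => (inv_nonneg.2 (hμ_pos r).le)
    linarith
  have hsplit2 : (∫ r in a..G, (μ r)⁻¹)
      = (∫ r in a..α, (μ r)⁻¹) + ∫ r in α..G, (μ r)⁻¹ :=
    (integral_add_adjacent_intervals (μ := volume) (hc.intervalIntegrable a α)
      (hc.intervalIntegrable α G)).symm
  calc (∫ r in a..(f t), (μ r)⁻¹) ≤ ∫ r in a..G, (μ r)⁻¹ := hWmono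
    _ = (∫ r in a..α, (μ r)⁻¹) + ∫ r in α..G, (μ r)⁻¹ := hsplit2
    _ ≤ (∫ r in a..α, (μ r)⁻¹) + ∫ s in t₀..t, lam s := by
        exact add_le_add_right haux _
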